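/- On the unit 2-sphere, for multi-indices a, b with |a| = |b| = l, one has ∫_{S²}⟨∇φ^a, ∇φ^b⟩ dM = −l² ∫_{S²} φ^{a+b} dM + Σ_i a_i b_i ∫_{S²} φ^{a+b−2ε_i} dM. -/

import Mathlib

open MeasureTheory Real
open scoped RealInnerProductSpace

noncomputable section

/-- Euclidean 3-space. -/
abbrev E3 := EuclideanSpace ℝ (Fin 3)

/-- The unit 2-sphere `S² ⊂ ℝ³` as a subset. -/
def Sph : Set E3 := Metric.sphere (0 : E3) 1

/-- The round surface measure on the unit 2-sphere. -/
def μS : Measure (Metric.sphere (0 : E3) 1) := (volume : Measure E3).toSphere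

/-- The Riemannian gradient on the unit sphere, computed extrinsically: the Euclidean
gradient of the degree-zero homogeneous extension of `F` (which is automatically
tangent to the sphere). -/
def sgrad {n : ℕ} (F : EuclideanSpace ℝ (Fin n) → ℝ) (x : EuclideanSpace ℝ (Fin n)) :
    EuclideanSpace ℝ (Fin n) :=
  gradient (fun y => F (‖y‖⁻¹ • y)) x

/-- The Euclidean Laplacian. -/
def elap {n : ℕ} (F : EuclideanSpace ℝ (Fin n) → ℝ) (x : EuclideanSpace ℝ (Fin n)) : ℝ :=
  ∑ i, fderiv ℝ (fun y => fderiv ℝ F y (EuclideanSpace.single i 1)) x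
    (EuclideanSpace.single i 1)

/-- The Laplace–Beltrami operator on the unit sphere, computed extrinsically as the
Euclidean Laplacian of the degree-zero homogeneous extension. -/
def slap {n : ℕ} (F : EuclideanSpace ℝ (Fin n) → ℝ) (x : EuclideanSpace ℝ (Fin n)) : ℝ :=
  elap (fun y => F (‖y‖⁻¹ • y)) x

/-- The Riemannian Hessian on the unit sphere, evaluated on tangent vectors `v, w`:
the derivative of the (extended, tangential) gradient field. -/
def shess {n : ℕ} (F : EuclideanSpace ℝ (Fin n) → ℝ) (x v w : EuclideanSpace ℝ (Fin n)) :
    ℝ :=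
  ⟪fderiv ℝ (sgrad F) x v, w⟫

/-- The cross product on `ℝ³`. -/
def cross3 (x v : E3) : E3 :=
  (WithLp.equiv 2 (Fin 3 → ℝ)).symm
    ![x 1 * v 2 - x 2 * v 1, x 2 * v 0 - x 0 * v 2, x 0 * v 1 - x 1 * v 0]

/-- The standard complex structure of `S²` at a point `x`: rotation by `π/2` of the
tangent plane `x^⊥`, given by `v ↦ x × v`. -/
def Jop (x v : E3) : E3 := cross3 x v

def Pm (a : Fin 3 → ℕ) (x : E3) : ℝ := ∏ j, x j ^ a j

def mco (a : Fin 3 → ℕ) (x : E3) (i : Fin 3) : ℝ :=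
  (a i : ℝ) * ∏ j, x j ^ (a j - if j = i then 1 else 0)

def mgrad (l : ℕ) (a : Fin 3 → ℕ) (x : E3) : E3 :=
  (WithLp.equiv 2 (Fin 3 → ℝ)).symm fun i => mco a x i - (l : ℝ) * Pm a x * x i

lemma mco_eq (a : Fin 3 → ℕ) (x : E3) (i : Fin 3) :
    (∏ j ∈ Finset.univ.erase i, x j ^ a j) * ((a i : ℝ) * x i ^ (a i - 1)) = mco a x i := by
  unfold mco
  rcases Nat.eq_zero_or_pos (a i) with h | h
  · simp [h]
  · have h1 : ∏ j, x j ^ (a j - if j = i then 1 else 0)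
        = x i ^ (a i - 1) * ∏ j ∈ Finset.univ.erase i, x j ^ (a j - if j = i then 1 else 0) := by
      rw [← Finset.mul_prod_erase Finset.univ _ (Finset.mem_univ i), if_pos rfl]
    have h2 : ∀ j ∈ Finset.univ.erase i, x j ^ (a j - if j = i then 1 else 0) = x j ^ a j := by
      intro j hj
      rw [if_neg (Finset.ne_of_mem_erase hj), Nat.sub_zero]
    rw [h1, Finset.prod_congr rfl h2]
    ring

lemma euler (a : Fin 3 → ℕ) (x : E3) (i : Fin 3) :
    mco a x i * x i = (a i : ℝ) * Pm a x := by
  unfold mco Pm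
  rcases Nat.eq_zero_or_pos (a i) with h | h
  · simp [h]
  · have h1 : ∏ j, x j ^ (a j - if j = i then 1 else 0)
        = x i ^ (a i - 1) * ∏ j ∈ Finset.univ.erase i, x j ^ a j := by
      rw [← Finset.mul_prod_erase Finset.univ _ (Finset.mem_univ i), if_pos rfl]
      congr 1
      refine Finset.prod_congr rfl fun j hj => ?_
      rw [if_neg (Finset.ne_of_mem_erase hj), Nat.sub_zero]
    have h2 : ∏ j, x j ^ a j = x i ^ a i * ∏ j ∈ Finset.univ.erase i, x j ^ a j :=
      (Finset.mul_prod_erase Finset.univ _ (Finset.mem_univ i)).symm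
    rw [h1, h2]
    have h3 : x i ^ (a i - 1) * x i = x i ^ a i := by
      rw [← pow_succ, Nat.sub_add_cancel h]
    rw [← h3]
    ring

lemma cross (a b : Fin 3 → ℕ) (x : E3) (i : Fin 3) :
    mco a x i * mco b x i
      = (a i : ℝ) * (b i : ℝ) * ∏ j, x j ^ (a j + b j - 2 * if j = i then 1 else 0) := by
  unfold mco
  rcases Nat.eq_zero_or_pos (a i) with h | ha
  · simp [h]
  rcases Nat.eq_zero_or_pos (b i) with h | hb
  · simp [h]
  have key : (∏ j, x j ^ (a j - if j = i then 1 else 0)) *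
      ∏ j, x j ^ (b j - if j = i then 1 else 0)
      = ∏ j, x j ^ (a j + b j - 2 * if j = i then 1 else 0) := by
    rw [← Finset.prod_mul_distrib]
    refine Finset.prod_congr rfl fun j _ => ?_
    rw [← pow_add]
    congr 1
    by_cases hji : j = i
    · subst hji; simp only [eq_self_iff_true, if_true]
      omega
    · simp only [if_neg hji]; omega
  calc (a i : ℝ) * (∏ j, x j ^ (a j - if j = i then 1 else 0)) *
        ((b i : ℝ) * ∏ j, x j ^ (b j - if j = i then 1 else 0))
      = (a i : ℝ) * (b i : ℝ) * ((∏ j, x j ^ (a j - if j = i then 1 else 0)) *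
        ∏ j, x j ^ (b j - if j = i then 1 else 0)) := by ring
    _ = _ := by rw [key]

lemma hasGradientAt_key (l : ℕ) (a : Fin 3 → ℕ) (ha : (∑ i, a i) = l) (x : E3)
    (hx : ‖x‖ = 1) :
    HasGradientAt (fun y : E3 => ∏ i, ((‖y‖⁻¹ • y) i) ^ (a i)) (mgrad l a x) x := by
  have hx0 : x ≠ 0 := fun h => by simp [h] at hx
  set c : ℝ := -(l : ℝ) / 2 with hc
  -- the two functions agree near x
  have heq : (fun y : E3 => ∏ i, ((‖y‖⁻¹ • y) i) ^ (a i))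
      =ᶠ[nhds x] (fun y : E3 => ((‖y‖ ^ 2 : ℝ) ^ c) * ∏ i, (y i) ^ (a i)) := by
    have hmem : {(0 : E3)}ᶜ ∈ nhds x := isOpen_compl_singleton.mem_nhds (by simpa using hx0)
    filter_upwards [hmem] with y hy
    have hy0 : y ≠ 0 := hy
    have hny : (0:ℝ) < ‖y‖ := norm_pos_iff.mpr hy0
    have h1 : ∀ i ∈ Finset.univ, ((‖y‖⁻¹ • y) i) ^ (a i)
        = (‖y‖⁻¹) ^ (a i) * (y i) ^ (a i) := by
      intro i _; rw [PiLp.smul_apply, smul_eq_mul, mul_pow]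
    rw [Finset.prod_congr rfl h1, Finset.prod_mul_distrib, Finset.prod_pow_eq_pow_sum, ha]
    congr 1
    have h2 : (‖y‖ ^ 2 : ℝ) = ‖y‖ ^ ((2:ℕ):ℝ) := by rw [Real.rpow_natCast]
    rw [h2, ← Real.rpow_mul hny.le]
    have h3 : ((2:ℕ):ℝ) * c = -(l:ℝ) := by rw [hc]; push_cast; ring
    rw [h3, Real.rpow_neg hny.le, Real.rpow_natCast, inv_pow]
  rw [hasGradientAt_iff_hasFDerivAt]
  refine HasFDerivAt.congr_of_eventuallyEq ?_ heq
  -- derivative of ‖·‖²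
  have hN : HasFDerivAt (fun y : E3 => ‖y‖ ^ 2) (2 • (innerSL ℝ x : E3 →L[ℝ] ℝ)) x := by
    have h := (hasFDerivAt_id x).inner ℝ (hasFDerivAt_id x)
    have h' := h.congr_of_eventuallyEq
      (Filter.EventuallyEq.of_eq (funext fun y : E3 => (real_inner_self_eq_norm_sq y).symm))
    refine h'.congr_fderiv ?_
    ext v
    simp only [ContinuousLinearMap.coe_comp', Function.comp_apply,
      ContinuousLinearMap.prod_apply, ContinuousLinearMap.coe_id', id, fderivInnerCLM_apply,
      innerSL_apply_apply, ContinuousLinearMap.smul_apply]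
    rw [real_inner_comm]
    ring_nf
  -- derivative of t ↦ t ^ c at ‖x‖² = 1
  have hr : HasDerivAt (fun t : ℝ => t ^ c) c (‖x‖ ^ 2) := by
    have h := Real.hasDerivAt_rpow_const (x := ‖x‖ ^ 2) (p := c)
      (Or.inl (by rw [hx]; norm_num))
    rw [hx] at h
    norm_num at h
    rw [hx]
    norm_num
    exact h
  have hR : HasFDerivAt (fun y : E3 => (‖y‖ ^ 2 : ℝ) ^ c)
      (c • (2 • (innerSL ℝ x : E3 →L[ℝ] ℝ))) x := by
      have := hr.comp_hasFDerivAt x hN; exact this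
  -- derivative of the polynomial
  have hP : HasFDerivAt (fun y : E3 => ∏ i, (y i) ^ (a i))
      (∑ i, (∏ j ∈ Finset.univ.erase i, (x j) ^ (a j)) •
        (((a i : ℝ) * (x i) ^ (a i - 1)) • (EuclideanSpace.proj (𝕜 := ℝ) i))) x := by
    refine HasFDerivAt.finset_prod fun i _ => ?_
    exact (hasDerivAt_pow (a i) (x i)).comp_hasFDerivAt x
      (EuclideanSpace.proj (𝕜 := ℝ) i).hasFDerivAt
  have hMul := hR.mul hP
  refine hMul.congr_fderiv ?_
  ext v
  have hxsq : (‖x‖ ^ 2 : ℝ) ^ c = 1 := by rw [hx]; norm_num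
  simp only [ContinuousLinearMap.add_apply, ContinuousLinearMap.smul_apply,
    ContinuousLinearMap.coe_sum', Finset.sum_apply, innerSL_apply_apply, smul_eq_mul,
    InnerProductSpace.toDual_apply_apply, PiLp.inner_apply, RCLike.inner_apply, conj_trivial,
    hxsq, one_mul]
  have hproj : ∀ i, EuclideanSpace.proj (𝕜 := ℝ) i v = v i := fun i => rfl
  have hmg : ∀ i, mgrad l a x i = mco a x i - (l : ℝ) * Pm a x * x i := by
    intro i; unfold mgrad; rfl
  simp only [hproj, hmg]
  have hL : ∀ i ∈ Finset.univ, (∏ j ∈ Finset.univ.erase i, (x j) ^ (a j)) *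
      (((a i : ℝ) * (x i) ^ (a i - 1)) * v i) = mco a x i * v i := by
    intro i _
    rw [← mco_eq]
    ring
  have hRt : ∀ i ∈ Finset.univ, (mco a x i - (l : ℝ) * Pm a x * x i) * v i
      = mco a x i * v i - (l : ℝ) * Pm a x * (x i * v i) := fun i _ => by ring
  rw [Finset.sum_congr rfl fun i _ => mul_comm (v i) (x i), Finset.sum_congr rfl hL,
    Finset.sum_congr rfl fun i hi => (mul_comm _ _).trans (hRt i hi), Finset.sum_sub_distrib,
    ← Finset.mul_sum]
  rw [hc]
  unfold Pm
  ring

lemma inner_mgrad (l : ℕ) (a b : Fin 3 → ℕ) (ha : (∑ i, a i) = l) (hb : (∑ i, b i) = l)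
    (x : E3) (hx : ‖x‖ = 1) :
    ⟪mgrad l a x, mgrad l b x⟫ =
      -(l : ℝ) ^ 2 * ∏ i, x i ^ (a i + b i) +
        ∑ i, (a i : ℝ) * (b i : ℝ) *
          ∏ j, x j ^ (a j + b j - 2 * (if j = i then 1 else 0)) := by
  have hsq : ∑ i, x i * x i = 1 := by
    have h : ⟪x, x⟫ = 1 := by rw [real_inner_self_eq_norm_sq, hx]; norm_num
    simpa only [PiLp.inner_apply, RCLike.inner_apply, conj_trivial] using h
  have heula : ∑ i, mco a x i * x i = (l : ℝ) * Pm a x := by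
    rw [Finset.sum_congr rfl fun i _ => euler a x i, ← Finset.sum_mul, ← ha]
    push_cast; ring
  have heulb : ∑ i, mco b x i * x i = (l : ℝ) * Pm b x := by
    rw [Finset.sum_congr rfl fun i _ => euler b x i, ← Finset.sum_mul, ← hb]
    push_cast; ring
  have hPab : Pm a x * Pm b x = ∏ i, x i ^ (a i + b i) := by
    unfold Pm
    rw [← Finset.prod_mul_distrib]
    exact Finset.prod_congr rfl fun i _ => (pow_add _ _ _).symm
  have hmg : ∀ (c : Fin 3 → ℕ) i, mgrad l c x i = mco c x i - (l : ℝ) * Pm c x * x i := by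
    intro c i; unfold mgrad; rfl
  rw [PiLp.inner_apply]
  simp only [RCLike.inner_apply, conj_trivial, hmg]
  have hexp : ∀ i ∈ Finset.univ,
      (mco a x i - (l : ℝ) * Pm a x * x i) * (mco b x i - (l : ℝ) * Pm b x * x i)
      = mco a x i * mco b x i - ((l : ℝ) * Pm b x) * (mco a x i * x i)
        - ((l : ℝ) * Pm a x) * (mco b x i * x i)
        + ((l : ℝ) * Pm a x * ((l : ℝ) * Pm b x)) * (x i * x i) := fun i _ => by ring
  rw [Finset.sum_congr rfl fun i hi => (mul_comm _ _).trans (hexp i hi)]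
  rw [Finset.sum_add_distrib, Finset.sum_sub_distrib, Finset.sum_sub_distrib,
    ← Finset.mul_sum, ← Finset.mul_sum, ← Finset.mul_sum, heula, heulb, hsq,
    Finset.sum_congr rfl fun i _ => cross a b x i, ← hPab]
  ring



lemma integrable_mon (k : Fin 3 → ℕ) :
    Integrable (fun x : Metric.sphere (0 : E3) 1 => ∏ j, ((x : E3) j) ^ (k j)) μS := by
  haveI : IsFiniteMeasure μS := by
    show IsFiniteMeasure ((volume : Measure E3).toSphere); infer_instance
  have hc : Continuous (fun x : Metric.sphere (0 : E3) 1 => ∏ j, ((x : E3) j) ^ (k j)) := by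
    refine continuous_finset_prod _ fun j _ => ?_
    exact ((EuclideanSpace.proj (𝕜 := ℝ) j).continuous.comp continuous_subtype_val).pow _
  exact hc.integrable_of_hasCompactSupport
    (IsCompact.of_isClosed_subset isCompact_univ (isClosed_tsupport _) (Set.subset_univ _))

/-- On the unit 2-sphere, for multi-indices `a, b` with `|a| = |b| = l`,
`∫_{S²} ⟨∇φ^a, ∇φ^b⟩ dM = −l² ∫_{S²} φ^{a+b} dM + Σ_i a_i b_i ∫_{S²} φ^{a+b−2ε_i} dM`
(terms with negative multi-index entries vanish). -/
theorem integral_inner_grad_monomials (l : ℕ) (a b : Fin 3 → ℕ)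
    (ha : (∑ i, a i) = l) (hb : (∑ i, b i) = l) :
    ∫ x : Metric.sphere (0 : E3) 1,
        ⟪sgrad (fun y => ∏ i, (y i) ^ (a i)) (x : E3),
          sgrad (fun y => ∏ i, (y i) ^ (b i)) (x : E3)⟫ ∂μS =
      -(l : ℝ) ^ 2 *
          ∫ x : Metric.sphere (0 : E3) 1, ∏ i, ((x : E3) i) ^ (a i + b i) ∂μS +
        ∑ i, (a i : ℝ) * (b i : ℝ) *
          ∫ x : Metric.sphere (0 : E3) 1,
            ∏ j, ((x : E3) j) ^ (a j + b j - 2 * (if j = i then 1 else 0)) ∂μS := by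
  have hpt : ∀ x : Metric.sphere (0 : E3) 1,
      ⟪sgrad (fun y => ∏ i, (y i) ^ (a i)) (x : E3),
        sgrad (fun y => ∏ i, (y i) ^ (b i)) (x : E3)⟫ =
      -(l : ℝ) ^ 2 * ∏ i, ((x : E3) i) ^ (a i + b i) +
        ∑ i, (a i : ℝ) * (b i : ℝ) *
          ∏ j, ((x : E3) j) ^ (a j + b j - 2 * (if j = i then 1 else 0)) := by
    intro x
    have hx1 : ‖(x : E3)‖ = 1 := norm_eq_of_mem_sphere x
    have hga : sgrad (fun y => ∏ i, (y i) ^ (a i)) (x : E3) = mgrad l a (x : E3) :=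
      (hasGradientAt_key l a ha (x : E3) hx1).gradient
    have hgb : sgrad (fun y => ∏ i, (y i) ^ (b i)) (x : E3) = mgrad l b (x : E3) :=
      (hasGradientAt_key l b hb (x : E3) hx1).gradient
    rw [hga, hgb]
    exact inner_mgrad l a b ha hb (x : E3) hx1
  rw [show (fun x : Metric.sphere (0 : E3) 1 =>
      ⟪sgrad (fun y => ∏ i, (y i) ^ (a i)) (x : E3),
        sgrad (fun y => ∏ i, (y i) ^ (b i)) (x : E3)⟫) = fun x : Metric.sphere (0 : E3) 1 =>
      -(l : ℝ) ^ 2 * ∏ i, ((x : E3) i) ^ (a i + b i) +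
        ∑ i, (a i : ℝ) * (b i : ℝ) *
          ∏ j, ((x : E3) j) ^ (a j + b j - 2 * (if j = i then 1 else 0)) from funext hpt]
  rw [integral_add ((integrable_mon _).const_mul _)
      (integrable_finset_sum _ fun i _ => (integrable_mon _).const_mul _)]
  rw [integral_const_mul, integral_finset_sum _ fun i _ => (integrable_mon _).const_mul _]
  congr 1
  exact Finset.sum_congr rfl fun i _ => integral_const_mul _ _
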